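/- Let μ ∈ Λ(ℤ_p^×) be a measure such that ∫_{ℤ_p^×} x^k dμ = 0 for all integers k > 0. Then μ = 0. Moreover, if ∫_{ℤ_p^×} x^k dμ ≠ 0 for all k > 0, then μ is not a zero divisor in Λ(ℤ_p^×). -/

import Mathlib

variable (p : ℕ) [Fact p.Prime]

/-- The function `x ↦ x^k` as a continuous map `ℤ_p^× → ℤ_p`. -/
noncomputable def powUnitsC (k : ℕ) : C((ℤ_[p])ˣ, ℤ_[p]) :=
  ⟨fun x => (x : ℤ_[p]) ^ k, (Units.continuous_val.pow k)⟩

/-- Left multiplication by a unit, as a continuous map `ℤ_p^× → ℤ_p^×`. -/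
noncomputable def mulUnitsC (x : (ℤ_[p])ˣ) : C((ℤ_[p])ˣ, (ℤ_[p])ˣ) :=
  ⟨fun y => x * y, by continuity⟩

open Filter PadicInt Finset Topology Polynomial
open scoped fwdDiff

namespace MomentsAux

variable {p}

lemma isClosedEmbedding_val' : Topology.IsClosedEmbedding (Units.val : ℤ_[p]ˣ → ℤ_[p]) := by
  refine ⟨Units.isOpenEmbedding_val.toIsEmbedding, ?_⟩
  have h : Set.range (Units.val : ℤ_[p]ˣ → ℤ_[p]) = {x : ℤ_[p] | ‖x‖ = 1} := by
    ext x
    constructor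
    · rintro ⟨u, rfl⟩; exact PadicInt.norm_units u
    · intro hx
      obtain ⟨u, hu⟩ := PadicInt.isUnit_iff.mpr hx
      exact ⟨u, hu⟩
  rw [h]
  exact isClosed_eq continuous_norm continuous_const

instance : CompactSpace ℤ_[p]ˣ := isClosedEmbedding_val'.compactSpace

open Classical in
/-- Retraction sending a unit of `ℤ_p` to itself as an element of `ℤ_p^×`. -/
noncomputable def runit : ℤ_[p] → ℤ_[p]ˣ := fun x => if h : IsUnit x then h.unit else 1

lemma runit_coe (u : ℤ_[p]ˣ) : runit ((u : ℤ_[p])) = u := by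
  apply Units.ext
  simp only [runit, dif_pos u.isUnit, IsUnit.unit_spec]

lemma continuousOn_runit : ContinuousOn (runit : ℤ_[p] → ℤ_[p]ˣ)
    (Set.range (Units.val : ℤ_[p]ˣ → ℤ_[p])) := by
  rw [continuousOn_iff_continuous_restrict]
  have heq : (Set.range (Units.val : ℤ_[p]ˣ → ℤ_[p])).domRestrict runit
      = (Topology.IsEmbedding.toHomeomorph
          ((Units.isOpenEmbedding_val (R := ℤ_[p])).toIsEmbedding)).symm := by
    funext x
    obtain ⟨u, hu⟩ := x.2
    have hx : x = ⟨(u : ℤ_[p]), ⟨u, rfl⟩⟩ := Subtype.ext hu.symm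
    subst hx
    rw [Set.restrict_apply, runit_coe]
    apply (Topology.IsEmbedding.toHomeomorph
      ((Units.isOpenEmbedding_val (R := ℤ_[p])).toIsEmbedding)).injective
    apply Subtype.ext
    have := (Topology.IsEmbedding.toHomeomorph
      ((Units.isOpenEmbedding_val (R := ℤ_[p])).toIsEmbedding)).apply_symm_apply
      ⟨(u : ℤ_[p]), ⟨u, rfl⟩⟩
    rw [congrArg Subtype.val this]
    rfl
  rw [heq]
  exact Homeomorph.continuous_symm _

open Classical in
/-- Extension by zero of a continuous map on units, as a `ℚ_[p]`-valued map. -/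
noncomputable def extZero (f : C(ℤ_[p]ˣ, ℤ_[p])) : C(ℤ_[p], ℚ_[p]) where
  toFun := (Set.range (Units.val : ℤ_[p]ˣ → ℤ_[p])).piecewise
      (fun x => ((f (runit x) : ℤ_[p]) : ℚ_[p])) 0
  continuous_toFun := by
    have hclopen : IsClopen (Set.range (Units.val : ℤ_[p]ˣ → ℤ_[p])) :=
      ⟨isClosedEmbedding_val'.isClosed_range, Units.isOpenEmbedding_val.isOpen_range⟩
    apply continuous_piecewise
    · intro a ha
      rw [hclopen.frontier_eq] at ha
      exact absurd ha (Set.notMem_empty a)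
    · rw [hclopen.isClosed.closure_eq]
      exact (continuous_subtype_val.comp (map_continuous f)).comp_continuousOn continuousOn_runit
    · exact continuousOn_const

lemma extZero_apply_unit (f : C(ℤ_[p]ˣ, ℤ_[p])) (u : ℤ_[p]ˣ) :
    extZero f (u : ℤ_[p]) = ((f u : ℤ_[p]) : ℚ_[p]) := by
  classical
  have hmem : (u : ℤ_[p]) ∈ Set.range (Units.val : ℤ_[p]ˣ → ℤ_[p]) := ⟨u, rfl⟩
  simp only [extZero, ContinuousMap.coe_mk, Set.piecewise_eq_of_mem _ _ _ hmem, runit_coe]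

lemma norm_extZero_le (f : C(ℤ_[p]ˣ, ℤ_[p])) : ‖extZero f‖ ≤ 1 := by
  classical
  refine (ContinuousMap.norm_le _ zero_le_one).mpr fun x => ?_
  by_cases hx : x ∈ Set.range (Units.val : ℤ_[p]ˣ → ℤ_[p])
  · simp only [extZero, ContinuousMap.coe_mk, Set.piecewise_eq_of_mem _ _ _ hx]
    exact (f (runit x)).2
  · simp only [extZero, ContinuousMap.coe_mk, Set.piecewise_eq_of_notMem _ _ _ hx,
      Pi.zero_apply, norm_zero]
    exact zero_le_one

variable (p)

/-- The binomial coefficient function `x ↦ (x choose n)` as a continuous map on `ℤ_p^×`. -/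
noncomputable def chooseC (n : ℕ) : C((ℤ_[p])ˣ, ℤ_[p]) :=
  ⟨fun x => Ring.choose (x : ℤ_[p]) n, (PadicInt.continuous_choose n).comp Units.continuous_val⟩

lemma factorial_smul_chooseC (n : ℕ) :
    (n.factorial : ℤ_[p]) • chooseC p n
      = ∑ k ∈ range (n + 1), ((descPochhammer ℤ n).coeff k) • powUnitsC p k := by
  ext x
  have h1 := Ring.descPochhammer_eq_factorial_smul_choose (R := ℤ_[p]) (x : ℤ_[p]) n
  have h2 : (descPochhammer ℤ n).smeval ((x : ℤ_[p]))
      = ∑ k ∈ range (n + 1), ((descPochhammer ℤ n).coeff k) • ((x : ℤ_[p])) ^ k := by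
    rw [Polynomial.smeval_eq_sum]
    apply Polynomial.sum_over_range' _ (fun k => by simp [Polynomial.smul_pow])
    rw [descPochhammer_natDegree]
    omega
  simp only [ContinuousMap.smul_apply, ContinuousMap.coe_sum, Finset.sum_apply]
  rw [show ((n.factorial : ℤ_[p]) • chooseC p n x)
      = (n.factorial : ℕ) • Ring.choose ((x : ℤ_[p])) n by simp [chooseC, nsmul_eq_mul]]
  rw [← h1, h2]
  rfl

lemma norm_pow_totient_sub_one (m : ℕ) :
    ‖powUnitsC p ((p ^ m).totient) - powUnitsC p 0‖ ≤ (p : ℝ) ^ (-(m : ℤ)) := by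
  refine (ContinuousMap.norm_le _ (by positivity)).mpr fun x => ?_
  rw [ContinuousMap.sub_apply]
  show ‖(x : ℤ_[p]) ^ ((p ^ m).totient) - (x : ℤ_[p]) ^ 0‖ ≤ _
  rw [pow_zero, norm_le_pow_iff_mem_span_pow, ← ker_toZModPow, RingHom.mem_ker, map_sub,
    map_one, map_pow, sub_eq_zero]
  have hu : IsUnit (toZModPow m ((x : ℤ_[p]))) := x.isUnit.map (toZModPow m)
  have hT := ZMod.pow_totient hu.unit
  calc toZModPow m ((x : ℤ_[p])) ^ (p ^ m).totient
      = ((hu.unit ^ (p ^ m).totient : (ZMod (p ^ m))ˣ) : ZMod (p ^ m)) := by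
        rw [Units.val_pow_eq_pow_val, hu.unit_spec]
    _ = 1 := by rw [hT, Units.val_one]

lemma mu_one_eq_zero (μ : C((ℤ_[p])ˣ, ℤ_[p]) →L[ℤ_[p]] ℤ_[p])
    (h : ∀ k : ℕ, 0 < k → μ (powUnitsC p k) = 0) : μ (powUnitsC p 0) = 0 := by
  have hlim : Tendsto (fun m : ℕ => powUnitsC p ((p ^ m).totient)) atTop
      (𝓝 (powUnitsC p 0)) := by
    rw [tendsto_iff_norm_sub_tendsto_zero]
    refine squeeze_zero (fun m => norm_nonneg _) (norm_pow_totient_sub_one p) ?_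
    have h1 : Tendsto (fun m : ℕ => ((p : ℝ)⁻¹) ^ m) atTop (𝓝 0) := by
      apply tendsto_pow_atTop_nhds_zero_of_lt_one (by positivity)
      rw [inv_lt_one_iff₀]
      right
      exact_mod_cast Nat.Prime.one_lt (Fact.out)
    convert h1 using 2 with m
    rw [zpow_neg, zpow_natCast, inv_pow]
  have h2 : Tendsto (fun m : ℕ => μ (powUnitsC p ((p ^ m).totient))) atTop
      (𝓝 (μ (powUnitsC p 0))) := (μ.continuous.tendsto _).comp hlim
  have h3 : Tendsto (fun _ : ℕ => (0 : ℤ_[p])) atTop (𝓝 (μ (powUnitsC p 0))) := by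
    apply h2.congr
    intro m
    exact h _ (Nat.totient_pos.mpr (pow_pos (Nat.Prime.pos (Fact.out : p.Prime)) m))
  exact tendsto_nhds_unique h3 tendsto_const_nhds

lemma mu_chooseC_eq_zero (μ : C((ℤ_[p])ˣ, ℤ_[p]) →L[ℤ_[p]] ℤ_[p])
    (h : ∀ k : ℕ, 0 < k → μ (powUnitsC p k) = 0) (n : ℕ) : μ (chooseC p n) = 0 := by
  have h0 := mu_one_eq_zero p μ h
  have hkey := congrArg μ (factorial_smul_chooseC p n)
  rw [map_smul, map_sum] at hkey
  rw [Finset.sum_eq_zero (fun k _ => ?_)] at hkey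
  · have hfac : ((n.factorial : ℤ_[p])) ≠ 0 :=
      Nat.cast_ne_zero.mpr n.factorial_ne_zero
    rw [smul_eq_mul] at hkey
    rcases mul_eq_zero.mp hkey with h' | h'
    · exact absurd h' hfac
    · exact h'
  · rw [map_zsmul]
    rcases Nat.eq_zero_or_pos k with rfl | hk
    · rw [h0, smul_zero]
    · rw [h k hk, smul_zero]

instance : IsBoundedSMul ℤ_[p] ℚ_[p] :=
  IsBoundedSMul.of_norm_smul_le fun r x => by rw [Algebra.smul_def, norm_mul]; rfl

/-- A `ℤ_p`-valued measure on `ℤ_p^×` all of whose moments vanish is zero. -/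
lemma moments_zero (μ : C((ℤ_[p])ˣ, ℤ_[p]) →L[ℤ_[p]] ℤ_[p])
    (h : ∀ k : ℕ, 0 < k → μ (powUnitsC p k) = 0) : μ = 0 := by
  ext f
  rw [ContinuousLinearMap.zero_apply]
  -- Mahler expansion of the extension by zero of `f`
  set Fc : C(ℤ_[p], ℚ_[p]) := extZero f with hFc
  set a : ℕ → ℚ_[p] := fun n => (fwdDiff (1 : ℤ_[p]))^[n] (⇑Fc) 0 with ha
  have hanorm : ∀ n, ‖a n‖ ≤ 1 := fun n =>
    (IsUltrametricDist.norm_fwdDiff_iter_apply_le 1 Fc 0 n).trans (norm_extZero_le f)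
  set A : ℕ → ℤ_[p] := fun n => ⟨a n, hanorm n⟩ with hA
  have hsum := (hasSum_mahler Fc).tendsto_sum_nat
  have hTnorm : Tendsto (fun N => ‖(∑ n ∈ range N, mahlerTerm (a n) n) - Fc‖) atTop (𝓝 0) :=
    tendsto_iff_norm_sub_tendsto_zero.mp hsum
  -- partial sums inside `C(ℤ_p^×, ℤ_p)`
  set S : ℕ → C(ℤ_[p]ˣ, ℤ_[p]) := fun N => ∑ n ∈ range N, A n • chooseC p n with hS
  have hle : ∀ N, ‖S N - f‖ ≤ ‖(∑ n ∈ range N, mahlerTerm (a n) n) - Fc‖ := by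
    intro N
    refine (ContinuousMap.norm_le _ (norm_nonneg _)).mpr fun x => ?_
    have hpt : (((S N - f) x : ℤ_[p]) : ℚ_[p])
        = (((∑ n ∈ range N, mahlerTerm (a n) n) - Fc : C(ℤ_[p], ℚ_[p]))) ((x : ℤ_[p])) := by
      rw [ContinuousMap.sub_apply, ContinuousMap.sub_apply]
      rw [extZero_apply_unit f x]
      rw [PadicInt.coe_sub]
      congr 1
      have hl : ((S N x : ℤ_[p]) : ℚ_[p])
          = ((Coe.ringHom : ℤ_[p] →+* ℚ_[p]) (S N x)) := rfl
      rw [hl, hS]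
      simp only [ContinuousMap.coe_sum, Finset.sum_apply, map_sum]
      refine Finset.sum_congr rfl fun n _ => ?_
      rw [mahlerTerm_apply, mahler_apply]
      show (((A n • chooseC p n) x : ℤ_[p]) : ℚ_[p]) = _
      rw [ContinuousMap.smul_apply, smul_eq_mul, PadicInt.coe_mul]
      show ((A n : ℚ_[p])) * ((chooseC p n x : ℤ_[p]) : ℚ_[p]) = _
      rw [Algebra.smul_def, mul_comm]
      rfl
    calc ‖(S N - f) x‖ = ‖(((S N - f) x : ℤ_[p]) : ℚ_[p])‖ := by rw [PadicInt.norm_def]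
      _ = ‖(((∑ n ∈ range N, mahlerTerm (a n) n) - Fc : C(ℤ_[p], ℚ_[p]))) ((x : ℤ_[p]))‖ := by
            rw [hpt]
      _ ≤ _ := ContinuousMap.norm_coe_le_norm _ _
  have hStend : Tendsto S atTop (𝓝 f) :=
    tendsto_iff_norm_sub_tendsto_zero.mpr
      (squeeze_zero (fun _ => norm_nonneg _) hle hTnorm)
  have h2 : Tendsto (fun N => μ (S N)) atTop (𝓝 (μ f)) :=
    (μ.continuous.tendsto _).comp hStend
  have h3 : Tendsto (fun _ : ℕ => (0 : ℤ_[p])) atTop (𝓝 (μ f)) := by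
    apply h2.congr
    intro N
    rw [hS]
    rw [map_sum]
    refine Finset.sum_eq_zero fun n _ => ?_
    rw [map_smul, mu_chooseC_eq_zero p μ h n, smul_zero]
  exact tendsto_nhds_unique h3 tendsto_const_nhds

end MomentsAux

/-- **Measures on `ℤ_p^×` are determined by the integrals of `x^k`, `k > 0`.**
Let `μ ∈ Λ(ℤ_p^×)` (a `ℤ_p`-valued measure on `ℤ_p^×`).  If `∫ x^k dμ = 0` for all `k > 0`
then `μ = 0`.  Moreover, if `∫ x^k dμ ≠ 0` for all `k > 0`, then `μ` is not a zero divisor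
for the convolution product: if `ν` is the convolution `μ * λ` (characterized by
`ν(f) = ∫ (∫ f(xy) dλ(y)) dμ(x)`) and `ν = 0`, then `λ = 0`. -/
theorem measure_determined_by_moments (μ : C((ℤ_[p])ˣ, ℤ_[p]) →L[ℤ_[p]] ℤ_[p]) :
    ((∀ k : ℕ, 0 < k → μ (powUnitsC p k) = 0) → μ = 0) ∧
    ((∀ k : ℕ, 0 < k → μ (powUnitsC p k) ≠ 0) →
      ∀ lam ν : C((ℤ_[p])ˣ, ℤ_[p]) →L[ℤ_[p]] ℤ_[p],
        (∀ (f g : C((ℤ_[p])ˣ, ℤ_[p])),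
          (∀ x : (ℤ_[p])ˣ, g x = lam (f.comp (mulUnitsC p x))) → ν f = μ g) →
        ν = 0 → lam = 0) := by
  constructor
  · exact MomentsAux.moments_zero p μ
  · intro hne lam ν hconv hν
    apply MomentsAux.moments_zero p lam
    intro k hk
    have hcomp : ∀ x : (ℤ_[p])ˣ,
        (lam (powUnitsC p k) • powUnitsC p k) x
          = lam ((powUnitsC p k).comp (mulUnitsC p x)) := by
      intro x
      have : (powUnitsC p k).comp (mulUnitsC p x) = ((x : ℤ_[p]) ^ k) • powUnitsC p k := by
        ext y
        show ((x * y : (ℤ_[p])ˣ) : ℤ_[p]) ^ k = ((x : ℤ_[p]) ^ k) • ((y : ℤ_[p]) ^ k)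
        rw [Units.val_mul, mul_pow, smul_eq_mul]
      rw [this, map_smul]
      show lam (powUnitsC p k) * ((x : ℤ_[p]) ^ k) = ((x : ℤ_[p]) ^ k) • lam (powUnitsC p k)
      rw [smul_eq_mul, mul_comm]
    have hνf := hconv (powUnitsC p k) (lam (powUnitsC p k) • powUnitsC p k) hcomp
    rw [hν, map_smul, ContinuousLinearMap.zero_apply, smul_eq_mul] at hνf
    rcases mul_eq_zero.mp hνf.symm with h' | h'
    · exact h'
    · exact absurd h' (hne k hk)
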